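/- Let Ṽ_1 be the normalised Wolbachia operator with η = 1. For every initial point s = (x₁⁽⁰⁾,x₂⁽⁰⁾,x₃⁽⁰⁾,u⁽⁰⁾) ∈ S^{3,1} with x₂⁽⁰⁾ > 0, the sequence Ṽ_1^k(s) converges as k → ∞, with limit (0, 1/2, 0, 1/2) if x₁⁽⁰⁾ = x₃⁽⁰⁾ = 0, and limit (1, 0, 0, 0) otherwise. -/

import Mathlib

/-- The normalised Wolbachia gonosomal operator with parameter `η`
(defined for points whose first three coordinates have positive sum). -/
noncomputable def nWolbOp (η : ℝ) (p : ℝ × ℝ × ℝ × ℝ) : ℝ × ℝ × ℝ × ℝ :=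
  (η * (2 * p.1 + p.2.2.1) / (2 * (p.1 + p.2.1 + p.2.2.1)),
   (p.2.1 + (1 - η) * p.2.2.1) / (2 * (p.1 + p.2.1 + p.2.2.1)),
   η * p.2.2.1 / (2 * (p.1 + p.2.1 + p.2.2.1)),
   ((1 - η) * (2 * p.1 + p.2.2.1) + p.2.1) / (2 * (p.1 + p.2.1 + p.2.2.1)))

/-- The set `S^{3,1}` of frequency distributions. -/
def S31 : Set (ℝ × ℝ × ℝ × ℝ) :=
  {p | 0 ≤ p.1 ∧ 0 ≤ p.2.1 ∧ 0 ≤ p.2.2.1 ∧ 0 ≤ p.2.2.2 ∧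
       0 < p.1 + p.2.1 + p.2.2.1 ∧ 0 < p.2.2.2 ∧
       p.1 + p.2.1 + p.2.2.1 + p.2.2.2 = 1}

lemma nWolbOp_homog (η t a b c d : ℝ) (ht : t ≠ 0) :
    nWolbOp η (t * a, t * b, t * c, t * d) = nWolbOp η (a, b, c, d) := by
  simp only [nWolbOp, Prod.mk.injEq]
  refine ⟨?_, ?_, ?_, ?_⟩
  · rw [show η * (2 * (t*a) + t*c) = t * (η * (2*a + c)) by ring,
        show 2 * (t*a + t*b + t*c) = t * (2 * (a + b + c)) by ring,
        mul_div_mul_left _ _ ht]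
  · rw [show t*b + (1 - η) * (t*c) = t * (b + (1 - η) * c) by ring,
        show 2 * (t*a + t*b + t*c) = t * (2 * (a + b + c)) by ring,
        mul_div_mul_left _ _ ht]
  · rw [show η * (t*c) = t * (η * c) by ring,
        show 2 * (t*a + t*b + t*c) = t * (2 * (a + b + c)) by ring,
        mul_div_mul_left _ _ ht]
  · rw [show (1 - η) * (2 * (t*a) + t*c) + t*b = t * ((1 - η) * (2*a + c) + b) by ring,
        show 2 * (t*a + t*b + t*c) = t * (2 * (a + b + c)) by ring,
        mul_div_mul_left _ _ ht]

lemma nWolbOp_key (x₁ x₂ x₃ u : ℝ) (h1 : 0 ≤ x₁) (h3 : 0 ≤ x₃) (hx2 : 0 < x₂) :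
    ∀ k : ℕ, (nWolbOp 1)^[k+1] (x₁,x₂,x₃,u) =
      ((2^(k+1)*x₁ + (2^(k+1)-1)*x₃)/(2^(k+1)*(x₁+x₃)+2*x₂),
       x₂/(2^(k+1)*(x₁+x₃)+2*x₂),
       x₃/(2^(k+1)*(x₁+x₃)+2*x₂),
       x₂/(2^(k+1)*(x₁+x₃)+2*x₂)) := by
  have hD : ∀ k : ℕ, (0:ℝ) < 2^(k+1)*(x₁+x₃)+2*x₂ := by
    intro k; positivity
  intro k
  induction k with
  | zero =>
    have hα : (0:ℝ) < 2 * (x₁ + x₂ + x₃) := by linarith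
    simp only [zero_add, Function.iterate_one, nWolbOp, Prod.mk.injEq]
    refine ⟨?_, ?_, ?_, ?_⟩ <;>
      (rw [div_eq_div_iff hα.ne' (hD 0).ne']; ring)
  | succ n ih =>
    rw [Function.iterate_succ_apply', ih]
    set D : ℝ := 2^(n+1)*(x₁+x₃)+2*x₂ with hDdef
    have hDne : D ≠ 0 := (hD n).ne'
    have ha : (0:ℝ) ≤ 2^(n+1)*x₁ + (2^(n+1)-1)*x₃ := by
      have : (1:ℝ) ≤ 2^(n+1) := one_le_pow₀ (by norm_num)
      nlinarith
    rw [show ((2^(n+1)*x₁ + (2^(n+1)-1)*x₃)/D, x₂/D, x₃/D, x₂/D)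
          = (D⁻¹ * (2^(n+1)*x₁ + (2^(n+1)-1)*x₃), D⁻¹ * x₂, D⁻¹ * x₃, D⁻¹ * x₂) by
        simp [div_eq_inv_mul],
       nWolbOp_homog 1 D⁻¹ _ _ _ _ (inv_ne_zero hDne)]
    have hα : (0:ℝ) < 2 * ((2^(n+1)*x₁ + (2^(n+1)-1)*x₃) + x₂ + x₃) := by linarith
    simp only [nWolbOp, Prod.mk.injEq]
    refine ⟨?_, ?_, ?_, ?_⟩ <;>
      (rw [div_eq_div_iff hα.ne' (hD (n+1)).ne']; ring)

theorem nWolbOp_one_limit (s : ℝ × ℝ × ℝ × ℝ) (hs : s ∈ S31) (hx2 : 0 < s.2.1) :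
    (s.1 = 0 ∧ s.2.2.1 = 0 →
      Filter.Tendsto (fun k => (nWolbOp 1)^[k] s) Filter.atTop
        (nhds ((0 : ℝ), (1 : ℝ) / 2, (0 : ℝ), (1 : ℝ) / 2))) ∧
    (¬(s.1 = 0 ∧ s.2.2.1 = 0) →
      Filter.Tendsto (fun k => (nWolbOp 1)^[k] s) Filter.atTop
        (nhds ((1 : ℝ), (0 : ℝ), (0 : ℝ), (0 : ℝ)))) := by
  obtain ⟨x₁, x₂, x₃, u⟩ := s
  obtain ⟨h1, h2, h3, h4, h5, h6, h7⟩ := hs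
  dsimp only at h1 h2 h3 h4 h5 h6 h7 hx2 ⊢
  have key := nWolbOp_key x₁ x₂ x₃ u h1 h3 hx2
  have hD : ∀ k : ℕ, (0:ℝ) < 2^(k+1)*(x₁+x₃)+2*x₂ := by intro k; positivity
  constructor
  · rintro ⟨rfl, rfl⟩
    apply (Filter.tendsto_add_atTop_iff_nat 1).mp
    have hconst : ∀ k : ℕ, (nWolbOp 1)^[k+1] ((0:ℝ), x₂, (0:ℝ), u)
        = ((0:ℝ), (1:ℝ)/2, (0:ℝ), (1:ℝ)/2) := by
      intro k
      have hhalf : x₂/(2*x₂) = 1/2 := by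
        rw [mul_comm, div_mul_eq_div_div, div_self hx2.ne']
      rw [key k]
      norm_num [hhalf]
    exact Filter.Tendsto.congr (fun k => (hconst k).symm) tendsto_const_nhds
  · intro hne
    have hb : 0 < x₁ + x₃ := by
      rcases lt_or_eq_of_le h1 with h | h
      · linarith
      · rcases lt_or_eq_of_le h3 with h' | h'
        · linarith
        · exact absurd ⟨h.symm, h'.symm⟩ hne
    -- r k = (1/2)^(k+1) tends to 0
    have hr : Filter.Tendsto (fun k : ℕ => ((1:ℝ)/2)^(k+1)) Filter.atTop (nhds 0) := by
      have h0 : Filter.Tendsto (fun k : ℕ => ((1:ℝ)/2)^k) Filter.atTop (nhds 0) :=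
        tendsto_pow_atTop_nhds_zero_of_lt_one (by norm_num) (by norm_num)
      have := h0.const_mul ((1:ℝ)/2)
      simp only [mul_zero] at this
      exact this.congr (fun k => by rw [pow_succ]; ring)
    have hrpos : ∀ k : ℕ, (0:ℝ) < ((1:ℝ)/2)^(k+1) := fun k => by positivity
    have hdenpos : ∀ k : ℕ, (0:ℝ) < (x₁+x₃) + ((1:ℝ)/2)^(k+1)*(2*x₂) := fun k => by
      have := hrpos k; nlinarith
    -- reformulated coordinates
    have hform : ∀ k : ℕ, (nWolbOp 1)^[k+1] (x₁, x₂, x₃, u)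
        = (((x₁+x₃) - ((1:ℝ)/2)^(k+1)*x₃)/((x₁+x₃) + ((1:ℝ)/2)^(k+1)*(2*x₂)),
           (((1:ℝ)/2)^(k+1)*x₂)/((x₁+x₃) + ((1:ℝ)/2)^(k+1)*(2*x₂)),
           (((1:ℝ)/2)^(k+1)*x₃)/((x₁+x₃) + ((1:ℝ)/2)^(k+1)*(2*x₂)),
           (((1:ℝ)/2)^(k+1)*x₂)/((x₁+x₃) + ((1:ℝ)/2)^(k+1)*(2*x₂))) := by
      intro k
      rw [key k]
      have hr1 : ((1:ℝ)/2)^(k+1) * 2^(k+1) = 1 := by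
        rw [← mul_pow]; norm_num
      simp only [Prod.mk.injEq]
      refine ⟨?_, ?_, ?_, ?_⟩ <;>
        rw [div_eq_div_iff (hD k).ne' (hdenpos k).ne']
      · linear_combination ((x₃ + 2*x₂)*(x₁+x₃)) * hr1
      · linear_combination (-(x₂*(x₁+x₃))) * hr1
      · linear_combination (-(x₃*(x₁+x₃))) * hr1
      · linear_combination (-(x₂*(x₁+x₃))) * hr1
    -- limits of the four coordinates
    have hnum1 : Filter.Tendsto (fun k : ℕ => (x₁+x₃) - ((1:ℝ)/2)^(k+1)*x₃)
        Filter.atTop (nhds (x₁+x₃)) := by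
      have := (tendsto_const_nhds : Filter.Tendsto (fun _ : ℕ => x₁+x₃)
        Filter.atTop (nhds (x₁+x₃))).sub (hr.mul_const x₃)
      simpa using this
    have hden : Filter.Tendsto (fun k : ℕ => (x₁+x₃) + ((1:ℝ)/2)^(k+1)*(2*x₂))
        Filter.atTop (nhds (x₁+x₃)) := by
      have := (tendsto_const_nhds : Filter.Tendsto (fun _ : ℕ => x₁+x₃)
        Filter.atTop (nhds (x₁+x₃))).add (hr.mul_const (2*x₂))
      simpa using this
    have hc1 : Filter.Tendsto
        (fun k : ℕ => ((x₁+x₃) - ((1:ℝ)/2)^(k+1)*x₃)/((x₁+x₃) + ((1:ℝ)/2)^(k+1)*(2*x₂)))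
        Filter.atTop (nhds 1) := by
      have := hnum1.div hden hb.ne'
      rwa [div_self hb.ne'] at this
    have hsmall : ∀ c : ℝ, Filter.Tendsto
        (fun k : ℕ => (((1:ℝ)/2)^(k+1)*c)/((x₁+x₃) + ((1:ℝ)/2)^(k+1)*(2*x₂)))
        Filter.atTop (nhds 0) := by
      intro c
      have := (hr.mul_const c).div hden hb.ne'
      simp only [zero_mul, zero_div] at this
      exact this
    apply (Filter.tendsto_add_atTop_iff_nat 1).mp
    have : Filter.Tendsto (fun k : ℕ =>
        (((x₁+x₃) - ((1:ℝ)/2)^(k+1)*x₃)/((x₁+x₃) + ((1:ℝ)/2)^(k+1)*(2*x₂)),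
         (((1:ℝ)/2)^(k+1)*x₂)/((x₁+x₃) + ((1:ℝ)/2)^(k+1)*(2*x₂)),
         (((1:ℝ)/2)^(k+1)*x₃)/((x₁+x₃) + ((1:ℝ)/2)^(k+1)*(2*x₂)),
         (((1:ℝ)/2)^(k+1)*x₂)/((x₁+x₃) + ((1:ℝ)/2)^(k+1)*(2*x₂))))
        Filter.atTop (nhds ((1:ℝ), (0:ℝ), (0:ℝ), (0:ℝ))) :=
      hc1.prodMk_nhds ((hsmall x₂).prodMk_nhds ((hsmall x₃).prodMk_nhds (hsmall x₂)))
    exact this.congr (fun k => (hform k).symm)
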